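/- Let p be a prime with p ≡ 1 (mod 4) and suppose there exist positive integers a, b, Δ with b ≡ 3 (mod 4) such that ab(ab−1) − pa = Δ² and p + b ≡ 0 (mod 4). Then the Legendre symbols satisfy (ab/p) = ((ab−1)/p) = −1. -/

import Mathlib

open NumberTheorySymbols

private lemma sq_mod8 (x : ℕ) (hx : x % 2 = 1) : x ^ 2 % 8 = 1 := by
  have h := Nat.pow_mod x 2 8
  have h8 : x % 8 = 1 ∨ x % 8 = 3 ∨ x % 8 = 5 ∨ x % 8 = 7 := by omega
  rcases h8 with h1 | h1 | h1 | h1 <;> rw [h, h1] <;> norm_num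

private lemma pow_even_eq_one {x : ℤ} {n : ℕ} (h : x ^ 2 = 1) (hn : n % 2 = 0) :
    x ^ n = 1 := by
  obtain ⟨t, rfl⟩ : ∃ t, n = 2 * t := ⟨n / 2, by omega⟩
  rw [pow_mul, h, one_pow]

private lemma pow_odd_eq_self {x : ℤ} {n : ℕ} (h : x ^ 2 = 1) (hn : n % 2 = 1) :
    x ^ n = x := by
  obtain ⟨t, rfl⟩ : ∃ t, n = 2 * t + 1 := ⟨n / 2, by omega⟩
  rw [pow_succ, pow_mul, h, one_pow, one_mul]

private lemma aux_not_dvd_ab (p : ℕ) (hpp : p.Prime) (a b Δ : ℤ)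
    (ha : 0 < a) (hb3 : 3 ≤ b) (hΔ : 0 < Δ)
    (heq : a * b * (a * b - 1) - (p : ℤ) * a = Δ ^ 2) :
    ¬ (p : ℤ) ∣ a * b := by
  rintro ⟨m, hm⟩
  have hp2 : (2:ℤ) ≤ p := by exact_mod_cast hpp.two_le
  have hm0 : 0 < m := by nlinarith
  have hprime : Prime ((p:ℕ) : ℤ) := Nat.prime_iff_prime_int.mp hpp
  have hpd : (p:ℤ) ∣ Δ ^ 2 := ⟨m * ((p:ℤ) * m - 1) - a, by rw [← heq, hm]; ring⟩
  obtain ⟨δ, hδ⟩ := hprime.dvd_of_dvd_pow hpd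
  have hδ0 : 0 < δ := by nlinarith
  have hkey : a + m = (p:ℤ) * (m ^ 2 - δ ^ 2) := by
    have hpne : (p:ℤ) ≠ 0 := by positivity
    apply mul_left_cancel₀ hpne
    have h2 : (p:ℤ) * m * ((p:ℤ) * m - 1) - (p:ℤ) * a = ((p:ℤ) * δ) ^ 2 := by
      rw [← hm, ← hδ]; exact heq
    nlinarith [h2]
  have hM1 : 1 ≤ m ^ 2 - δ ^ 2 := by nlinarith
  have hδm : δ ≤ m - 1 := by nlinarith
  have hM2 : 2 * m - 1 ≤ m ^ 2 - δ ^ 2 := by nlinarith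
  nlinarith [mul_le_mul_of_nonneg_left hb3 (le_of_lt ha), hkey]

private lemma aux_not_dvd_ab_sub_one (p : ℕ) (hpp : p.Prime) (hp1 : p % 4 = 1) (a b Δ : ℤ)
    (ha : 0 < a) (hb3 : 3 ≤ b) (hΔ : 0 < Δ) (hb4 : b % 4 = 3)
    (heq : a * b * (a * b - 1) - (p : ℤ) * a = Δ ^ 2) :
    ¬ (p : ℤ) ∣ a * b - 1 := by
  rintro ⟨m, hm⟩
  have hp2 : (2:ℤ) ≤ p := by exact_mod_cast hpp.two_le
  have hab1 : 1 ≤ a * b := by nlinarith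
  have hm0 : 0 < m := by nlinarith
  have hprime : Prime ((p:ℕ) : ℤ) := Nat.prime_iff_prime_int.mp hpp
  have hpd : (p:ℤ) ∣ Δ ^ 2 := ⟨((p:ℤ) * m + 1) * m - a, by
    have hab : a * b = (p:ℤ) * m + 1 := by linarith
    rw [← heq, hab]; ring⟩
  obtain ⟨δ, hδ⟩ := hprime.dvd_of_dvd_pow hpd
  have hδ0 : 0 < δ := by nlinarith
  have hkey : a - m = (p:ℤ) * (m ^ 2 - δ ^ 2) := by
    have hpne : (p:ℤ) ≠ 0 := by positivity
    apply mul_left_cancel₀ hpne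
    have hab : a * b = (p:ℤ) * m + 1 := by linarith
    have h2 : ((p:ℤ) * m + 1) * ((p:ℤ) * m + 1 - 1) - (p:ℤ) * a = ((p:ℤ) * δ) ^ 2 := by
      rw [← hab, ← hδ]; exact heq
    nlinarith [h2]
  rcases lt_trichotomy (m ^ 2 - δ ^ 2) 0 with hM | hM | hM
  · have h1 : m + 1 ≤ δ := by nlinarith
    have h2 : 2 * m + 1 ≤ δ ^ 2 - m ^ 2 := by nlinarith
    nlinarith
  · have ham : a = m := by rw [hM, mul_zero] at hkey; linarith
    have h1 : a * (b - p) = 1 := by rw [← ham] at hm; nlinarith [hm]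
    have ha1 : a = 1 := by
      have hu := IsUnit.of_mul_eq_one (b - p) h1
      rcases Int.isUnit_iff.mp hu with h | h
      · exact h
      · omega
    have hbp : b = p + 1 := by rw [ha1] at h1; linarith
    have hpz : ((p:ℤ)) % 4 = 1 := by
      have := Int.natCast_mod p 4
      rw [hp1] at this
      exact_mod_cast this.symm
    omega
  · have hM1 : 1 ≤ m ^ 2 - δ ^ 2 := hM
    have hδm : δ ≤ m - 1 := by nlinarith
    have hM2 : 2 * m - 1 ≤ m ^ 2 - δ ^ 2 := by nlinarith
    nlinarith [mul_le_mul_of_nonneg_left hb3 (le_of_lt ha), hkey, hm]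

set_option maxHeartbeats 2000000 in
/-- Let `p ≡ 1 (mod 4)` be a prime and suppose positive integers `a, b, Δ` with
`b ≡ 3 (mod 4)` satisfy `a*b*(a*b-1) - p*a = Δ^2` and `p + b ≡ 0 (mod 4)`.
Then `(ab/p) = ((ab-1)/p) = -1`. -/
theorem stmt_13 (p : ℕ) [Fact p.Prime] (hp1 : p % 4 = 1) (a b Δ : ℤ)
    (ha : 0 < a) (hb : 0 < b) (hΔ : 0 < Δ) (hb4 : b % 4 = 3)
    (heq : a * b * (a * b - 1) - (p : ℤ) * a = Δ ^ 2)
    (hpb : ((p : ℤ) + b) % 4 = 0) :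
    legendreSym p (a * b) = -1 ∧ legendreSym p (a * b - 1) = -1 := by
  have hpp : p.Prime := Fact.out
  have hp2 : 2 ≤ p := hpp.two_le
  have hpodd : p % 2 = 1 := by omega
  have hb3 : (3:ℤ) ≤ b := by omega
  have hnd1 : ¬ (p : ℤ) ∣ a * b := aux_not_dvd_ab p hpp a b Δ ha hb3 hΔ heq
  have hnd2 : ¬ (p : ℤ) ∣ a * b - 1 :=
    aux_not_dvd_ab_sub_one p hpp hp1 a b Δ ha hb3 hΔ hb4 heq
  -- natural number versions
  obtain ⟨A, hA⟩ : ∃ A : ℕ, (A:ℤ) = a := ⟨a.toNat, Int.toNat_of_nonneg ha.le⟩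
  obtain ⟨B, hB⟩ : ∃ B : ℕ, (B:ℤ) = b := ⟨b.toNat, Int.toNat_of_nonneg hb.le⟩
  obtain ⟨D, hD⟩ : ∃ D : ℕ, (D:ℤ) = Δ := ⟨Δ.toNat, Int.toNat_of_nonneg hΔ.le⟩
  set Kz : ℤ := a * b * b - b - p with hKzdef
  have hKzmul : a * Kz = Δ ^ 2 := by rw [hKzdef]; linear_combination heq
  have hKzpos : 0 < Kz := by nlinarith [sq_nonneg Δ, hΔ]
  obtain ⟨K, hK⟩ : ∃ K : ℕ, (K:ℤ) = Kz := ⟨Kz.toNat, Int.toNat_of_nonneg hKzpos.le⟩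
  have hA0 : 0 < A := by exact_mod_cast hA ▸ ha
  have hB0 : 0 < B := by exact_mod_cast hB ▸ hb
  have hD0 : 0 < D := by exact_mod_cast hD ▸ hΔ
  have hK0 : 0 < K := by exact_mod_cast hK ▸ hKzpos
  have hB4 : B % 4 = 3 := by
    have h : ((B % 4 : ℕ) : ℤ) = 3 := by push_cast [hB]; omega
    exact_mod_cast h
  have hBodd : Odd B := Nat.odd_iff.mpr (by omega)
  have hAK : A * K = D ^ 2 := by
    have : ((A * K : ℕ) : ℤ) = ((D ^ 2 : ℕ) : ℤ) := by push_cast [hA, hK, hD]; linarith [hKzmul]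
    exact_mod_cast this
  have hAB1 : 1 ≤ A * B := Nat.one_le_iff_ne_zero.mpr (by positivity)
  have hF2 : K + B + p = A * B ^ 2 := by
    have : ((K + B + p : ℕ) : ℤ) = ((A * B ^ 2 : ℕ) : ℤ) := by
      push_cast [hA, hB, hK]; rw [hKzdef]; ring
    exact_mod_cast this
  have hF3 : B * (A * B - 1) = K + p := by
    have : ((B * (A * B - 1) : ℕ) : ℤ) = ((K + p : ℕ) : ℤ) := by
      push_cast [hA, hB, hK, Nat.cast_sub hAB1]
      rw [hKzdef]; ring
    exact_mod_cast this
  -- nondegeneracy in ℕ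
  have hpB : ¬ p ∣ B := by
    intro h
    exact hnd1 (Dvd.dvd.mul_left (by exact_mod_cast hB ▸ Int.natCast_dvd_natCast.mpr h) a)
  have hpA : ¬ p ∣ A := by
    intro h
    exact hnd1 (Dvd.dvd.mul_right (by exact_mod_cast hA ▸ Int.natCast_dvd_natCast.mpr h) b)
  have hpK : ¬ p ∣ K := by
    intro h
    have h1 : p ∣ B * (A * B - 1) := hF3 ▸ Nat.dvd_add h (dvd_refl p)
    rcases (Nat.Prime.dvd_mul hpp).mp h1 with h2 | h2
    · exact hpB h2
    · apply hnd2
      have h3 : ((p:ℕ):ℤ) ∣ ((A * B - 1 : ℕ) : ℤ) := Int.natCast_dvd_natCast.mpr h2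
      rwa [Nat.cast_sub hAB1, Nat.cast_mul, hA, hB, Nat.cast_one] at h3
  -- 2-adic decomposition
  set α := A.factorization 2 with hαdef
  set κ := K.factorization 2 with hκdef
  set e2 := D.factorization 2 with he2def
  set A₀ := A / 2 ^ α with hA₀def
  set K₀ := K / 2 ^ κ with hK₀def
  set E := D / 2 ^ e2 with hEdef
  have hAfac : 2 ^ α * A₀ = A := Nat.ordProj_mul_ordCompl_eq_self A 2
  have hKfac : 2 ^ κ * K₀ = K := Nat.ordProj_mul_ordCompl_eq_self K 2
  have hA₀odd : ¬ 2 ∣ A₀ := Nat.not_dvd_ordCompl Nat.prime_two hA0.ne'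
  have hK₀odd : ¬ 2 ∣ K₀ := Nat.not_dvd_ordCompl Nat.prime_two hK0.ne'
  have hEodd : ¬ 2 ∣ E := Nat.not_dvd_ordCompl Nat.prime_two hD0.ne'
  have hA₀pos : 0 < A₀ := Nat.ordCompl_pos 2 hA0.ne'
  have hK₀pos : 0 < K₀ := Nat.ordCompl_pos 2 hK0.ne'
  have hparity : α + κ = 2 * e2 := by
    have h1 : (A * K).factorization 2 = α + κ := by
      rw [Nat.factorization_mul hA0.ne' hK0.ne']; rfl
    have h2 : (D ^ 2).factorization 2 = 2 * e2 := by
      rw [Nat.factorization_pow]; simp [mul_comm]; rfl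
    rw [hAK, h2] at h1
    omega
  have hA0K0 : A₀ * K₀ = E ^ 2 := by
    have h1 : (A * K) / 2 ^ ((A * K).factorization 2) = A₀ * K₀ := Nat.ordCompl_mul A K 2
    have h2 : (D * D) / 2 ^ ((D * D).factorization 2) = E * E := Nat.ordCompl_mul D D 2
    have h3 : A * K = D * D := by rw [hAK]; ring
    rw [h3, h2] at h1
    rw [← h1]; ring
  -- square decomposition of the odd parts
  set d := Nat.gcd A₀ K₀ with hddef
  have hd0 : 0 < d := Nat.gcd_pos_of_pos_left K₀ hA₀pos
  have hdA₀ : d ∣ A₀ := Nat.gcd_dvd_left A₀ K₀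
  have hdK₀ : d ∣ K₀ := Nat.gcd_dvd_right A₀ K₀
  have hUV : Nat.Coprime (A₀ / d) (K₀ / d) := Nat.coprime_div_gcd_div_gcd hd0
  have hUdef : d * (A₀ / d) = A₀ := Nat.mul_div_cancel' hdA₀
  have hVdef : d * (K₀ / d) = K₀ := Nat.mul_div_cancel' hdK₀
  have hdE : d ∣ E := by
    have h1 : d ^ 2 ∣ E ^ 2 := by
      rw [← hA0K0, pow_two]
      exact mul_dvd_mul hdA₀ hdK₀
    exact (Nat.pow_dvd_pow_iff (by norm_num)).mp h1
  have hUVE : (A₀ / d) * (K₀ / d) = (E / d) ^ 2 := by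
    apply Nat.eq_of_mul_eq_mul_left (show 0 < d * d by positivity)
    have hEd : d * (E / d) = E := Nat.mul_div_cancel' hdE
    calc d * d * (A₀ / d * (K₀ / d)) = (d * (A₀ / d)) * (d * (K₀ / d)) := by ring
      _ = A₀ * K₀ := by rw [hUdef, hVdef]
      _ = E ^ 2 := hA0K0
      _ = (d * (E / d)) ^ 2 := by rw [hEd]
      _ = d * d * (E / d) ^ 2 := by ring
  obtain ⟨u, hu⟩ : ∃ u, A₀ / d = u ^ 2 :=
    exists_eq_pow_of_mul_eq_pow (by rw [Nat.isUnit_iff]; exact hUV) hUVE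
  obtain ⟨v, hv⟩ : ∃ v, K₀ / d = v ^ 2 :=
    exists_eq_pow_of_mul_eq_pow (by rw [Nat.isUnit_iff]; exact hUV.symm)
      (by rw [mul_comm]; exact hUVE)
  have hA₀eq : A₀ = d * u ^ 2 := by rw [← hUdef, hu]
  have hK₀eq : K₀ = d * v ^ 2 := by rw [← hVdef, hv]
  -- divisibility facts
  have hA₀A : A₀ ∣ A := ⟨2 ^ α, by rw [← hAfac]; ring⟩
  have hK₀K : K₀ ∣ K := ⟨2 ^ κ, by rw [← hKfac]; ring⟩
  have hdodd : ¬ 2 ∣ d := fun h => hA₀odd (h.trans hdA₀)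
  have hdodd' : Odd d := Nat.odd_iff.mpr (by omega)
  have hdBp : d ∣ B + p := by
    have h1 : d ∣ A * B ^ 2 := dvd_mul_of_dvd_left (hdA₀.trans hA₀A) _
    have h2 : d ∣ K := hdK₀.trans hK₀K
    have h3 := Nat.dvd_sub h1 h2
    rwa [show A * B ^ 2 - K = B + p by omega] at h3
  have hpd : ¬ p ∣ d := by
    intro h
    exact hpB ((Nat.dvd_add_self_right).mp (h.trans hdBp))
  have hu2A₀ : u ^ 2 ∣ A₀ := ⟨d, by rw [hA₀eq]; ring⟩
  have hv2K₀ : v ^ 2 ∣ K₀ := ⟨d, by rw [hK₀eq]; ring⟩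
  have hpu : ¬ p ∣ u := fun h =>
    hpA (((h.trans (dvd_pow_self u two_ne_zero)).trans hu2A₀).trans hA₀A)
  have hpv : ¬ p ∣ v := fun h =>
    hpK (((h.trans (dvd_pow_self v two_ne_zero)).trans hv2K₀).trans hK₀K)
  have hcop_dB : Nat.Coprime d B := by
    have hgp : Nat.gcd d B ∣ p := by
      have h1 : Nat.gcd d B ∣ B + p := (Nat.gcd_dvd_left d B).trans hdBp
      have h2 := Nat.dvd_sub h1 (Nat.gcd_dvd_right d B)
      rwa [show B + p - B = p by omega] at h2
    rcases (Nat.Prime.eq_one_or_self_of_dvd hpp _ hgp) with h | h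
    · exact h
    · exact absurd (h ▸ Nat.gcd_dvd_left d B : p ∣ d) hpd
  have hcop_vB : Nat.Coprime v B := by
    have hgp : Nat.gcd v B ∣ p := by
      have h1 : Nat.gcd v B ∣ K + p := by
        have h0 : (B : ℕ) ∣ B * (A * B - 1) := Dvd.intro (A * B - 1) rfl
        rw [hF3] at h0
        exact (Nat.gcd_dvd_right v B).trans h0
      have h2 : Nat.gcd v B ∣ K :=
        (Nat.gcd_dvd_left v B).trans ((dvd_pow_self v two_ne_zero).trans (hv2K₀.trans hK₀K))
      have h3 := Nat.dvd_sub h1 h2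
      rwa [show K + p - K = p by omega] at h3
    rcases (Nat.Prime.eq_one_or_self_of_dvd hpp _ hgp) with h | h
    · exact h
    · exact absurd (h ▸ Nat.gcd_dvd_right v B : p ∣ B) hpB
  have hcop_Bp : Nat.Coprime B p := (hpp.coprime_iff_not_dvd.mpr hpB).symm
  have hcop_dp : Nat.Coprime d p := (hpp.coprime_iff_not_dvd.mpr hpd).symm
  have hcop_up : Nat.Coprime u p := (hpp.coprime_iff_not_dvd.mpr hpu).symm
  have hcop_vp : Nat.Coprime v p := (hpp.coprime_iff_not_dvd.mpr hpv).symm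
  have hcop_2p : Nat.Coprime 2 p :=
    (hpp.coprime_iff_not_dvd.mpr (fun h => by
      have := Nat.le_of_dvd (by norm_num) h; omega)).symm
  have hcop_2B : Nat.Coprime 2 B := Nat.coprime_two_left.mpr hBodd
  -- Jacobi symbol squares
  have hgcd_cast : ∀ (x : ℕ), Nat.Coprime x p → Int.gcd (x : ℤ) (p : ℕ) = 1 := by
    intro x h; simpa [Int.gcd_natCast_natCast] using h
  have hXd2 : J((d : ℤ) | p) ^ 2 = 1 := jacobiSym.sq_one (hgcd_cast d hcop_dp)
  have hXb2 : J((B : ℤ) | p) ^ 2 = 1 := jacobiSym.sq_one (hgcd_cast B hcop_Bp)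
  have hX22 : J((2 : ℤ) | p) ^ 2 = 1 := by
    have h := jacobiSym.sq_one (hgcd_cast 2 hcop_2p)
    simpa using h
  have hY22 : J((2 : ℤ) | B) ^ 2 = 1 := by
    apply jacobiSym.sq_one
    have h : Int.gcd ((2 : ℕ) : ℤ) (B : ℕ) = 1 := by
      rw [Int.gcd_natCast_natCast]; exact hcop_2B
    simpa using h
  -- symbol computations
  have hAeq : A = 2 ^ α * (d * u ^ 2) := by rw [← hAfac, hA₀eq]
  have hKeq : K = 2 ^ κ * (d * v ^ 2) := by rw [← hKfac, hK₀eq]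
  have hKzcast : Kz = (2 : ℤ) ^ κ * (d : ℤ) * ((v : ℤ)) ^ 2 := by
    rw [← hK, hKeq]; push_cast; ring
  have hJa : J(a | p) = J((2 : ℤ) | p) ^ α * J((d : ℤ) | p) := by
    have hcast : a = (2 : ℤ) ^ α * (d : ℤ) * ((u : ℤ)) ^ 2 := by
      rw [← hA, hAeq]; push_cast; ring
    rw [hcast, jacobiSym.mul_left, jacobiSym.mul_left, jacobiSym.pow_left,
      jacobiSym.sq_one' (hgcd_cast u hcop_up), mul_one]
  have hJK : J(Kz | p) = J((2 : ℤ) | p) ^ κ * J((d : ℤ) | p) := by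
    rw [hKzcast, jacobiSym.mul_left, jacobiSym.mul_left, jacobiSym.pow_left,
      jacobiSym.sq_one' (hgcd_cast v hcop_vp), mul_one]
  have hd4 : d % 4 = 1 ∨ d % 4 = 3 := by omega
  have hZXd : J((d : ℤ) | p) = J((d : ℤ) | B) := by
    have h1 : J((d : ℕ) | p) = J((p : ℕ) | d) :=
      (jacobiSym.quadratic_reciprocity_one_mod_four hp1 hdodd').symm
    have h2 : J(((p : ℕ) : ℤ) | d) = J(-((B : ℕ) : ℤ) | d) := by
      apply jacobiSym.mod_left'
      apply Int.modEq_iff_dvd.mpr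
      have h := Int.natCast_dvd_natCast.mpr hdBp
      push_cast at h
      have he : -((B : ℕ) : ℤ) - ((p : ℕ) : ℤ) = -(((B : ℕ) : ℤ) + ((p : ℕ) : ℤ)) := by ring
      rw [he]
      exact dvd_neg.mpr h
    have h3 : J(-((B : ℕ) : ℤ) | d) = J((-1 : ℤ) | d) * J(((B : ℕ) : ℤ) | d) := by
      rw [← jacobiSym.mul_left]; norm_num
    calc J((d : ℤ) | p) = J(((p : ℕ) : ℤ) | d) := h1
      _ = J(-((B : ℕ) : ℤ) | d) := h2
      _ = J((-1 : ℤ) | d) * J(((B : ℕ) : ℤ) | d) := h3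
      _ = J((d : ℤ) | B) := by
          rcases hd4 with h4 | h4
          · rw [jacobiSym.at_neg_one hdodd', ZMod.χ₄_nat_one_mod_four h4,
              jacobiSym.quadratic_reciprocity_one_mod_four' hBodd h4, one_mul]
          · rw [jacobiSym.at_neg_one hdodd', ZMod.χ₄_nat_three_mod_four h4,
              jacobiSym.quadratic_reciprocity_three_mod_four hB4 h4]
            ring
  have hJb : J(b | p) = -(J((2 : ℤ) | B) ^ κ * J((d : ℤ) | p)) := by
    have hb1 : J(b | p) = J(((B : ℕ) : ℤ) | p) := by rw [hB]
    have h1 : J((B : ℕ) | p) = J((p : ℕ) | B) :=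
      (jacobiSym.quadratic_reciprocity_one_mod_four hp1 hBodd).symm
    have h2 : J(((p : ℕ) : ℤ) | B) = J(-Kz | B) := by
      apply jacobiSym.mod_left'
      apply Int.modEq_iff_dvd.mpr
      refine ⟨-(a * b - 1), ?_⟩
      rw [hKzdef, ← hB]; ring
    have h3 : J(-Kz | B) = J((-1 : ℤ) | B) * J(Kz | B) := by
      rw [← jacobiSym.mul_left]; norm_num
    have hneg1 : J((-1 : ℤ) | B) = -1 := by
      rw [jacobiSym.at_neg_one hBodd, ZMod.χ₄_nat_three_mod_four hB4]
    have h4 : J(Kz | B) = J((2 : ℤ) | B) ^ κ * J((d : ℤ) | B) := by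
      have hvB : Int.gcd ((v : ℕ) : ℤ) (B : ℕ) = 1 := by
        simpa [Int.gcd_natCast_natCast] using hcop_vB
      rw [hKzcast, jacobiSym.mul_left, jacobiSym.mul_left, jacobiSym.pow_left,
        jacobiSym.sq_one' hvB, mul_one]
    rw [hb1, h1, h2, h3, hneg1, h4, ← hZXd]
    ring
  have hJsplit : J(Kz | p) = J(b | p) * J(a * b - 1 | p) := by
    have h0 : Kz = b * (a * b - 1) - ((p : ℕ) : ℤ) := by rw [hKzdef]; ring
    have h1 : J(b * (a * b - 1) - ((p : ℕ) : ℤ) | p) = J(b * (a * b - 1) | p) :=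
      jacobiSym.mod_left' (by simp [Int.sub_emod])
    rw [h0, h1, jacobiSym.mul_left]
  -- the 2-adic sign analysis
  have hA₀1 : A₀ % 2 = 1 := by omega
  have hK₀1 : K₀ % 2 = 1 := by omega
  have hE1 : E % 2 = 1 := by omega
  have hB1 : B % 2 = 1 := by omega
  have hP : J((2 : ℤ) | p) ^ α * J((2 : ℤ) | B) ^ κ = 1 ∧
      J((2 : ℤ) | p) ^ κ * J((2 : ℤ) | B) ^ κ = 1 := by
    rcases Nat.even_or_odd α with hαe | hαo
    · have hαm : α % 2 = 0 := Nat.even_iff.mp hαe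
      have hκm : κ % 2 = 0 := by omega
      constructor <;>
        rw [pow_even_eq_one hX22 (by omega), pow_even_eq_one hY22 hκm, one_mul]
    · have hα1 : α % 2 = 1 := Nat.odd_iff.mp hαo
      have hκ1 : κ % 2 = 1 := by omega
      have h8 : (p + B) % 8 = 0 := by
        by_contra h8
        have hpB4 : (p + B) % 4 = 0 := by omega
        have h84 : (p + B) % 8 = 4 := by omega
        obtain ⟨w0, hw0⟩ : ∃ w0, p + B = 4 * w0 := ⟨(p + B) / 4, by omega⟩
        have hw0odd : w0 % 2 = 1 := by omega
        have hM2 : (A₀ * B ^ 2) % 2 = 1 := by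
          have hB22 : B ^ 2 % 2 = 1 := by
            have h := Nat.pow_mod B 2 2
            rw [hB1] at h
            simpa using h
          have h := Nat.mul_mod A₀ (B ^ 2) 2
          rw [hA₀1, hB22] at h
          simpa using h
        by_cases hα1' : α = 1
        · -- then κ = 1 and a mod 8 contradiction
          have hA2 : A = 2 * A₀ := by rw [← hAfac, hα1']; ring
          have hKM : K + 4 * w0 = 2 * (A₀ * B ^ 2) := by
            have hABM : A * B ^ 2 = 2 * (A₀ * B ^ 2) := by rw [hA2]; ring
            omega
          have hκeq1 : κ = 1 := by
            by_contra hk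
            have h3κ : 3 ≤ κ := by omega
            have hpow : (2:ℕ) ^ κ = 4 * 2 ^ (κ - 2) := by
              rw [show κ = 2 + (κ - 2) by omega, pow_add]; norm_num
            have h4K : 4 ∣ K :=
              ⟨2 ^ (κ - 2) * K₀, by rw [← hKfac, hpow]; ring⟩
            obtain ⟨M, hM⟩ : ∃ M, M = A₀ * B ^ 2 := ⟨_, rfl⟩
            rw [← hM] at hKM hM2
            omega
          have hK2 : K = 2 * K₀ := by rw [← hKfac, hκeq1]; ring
          have hK₀M : K₀ + 2 * w0 = A₀ * B ^ 2 := by omega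
          have hmain : E ^ 2 + 2 * (A₀ * w0) = (A₀ * B) ^ 2 := by
            have h5 : (A₀ * B) ^ 2 = A₀ * (A₀ * B ^ 2) := by ring
            rw [h5, ← hK₀M, Nat.mul_add, hA0K0]
            ring
          have hE2 : E ^ 2 % 8 = 1 := sq_mod8 E hE1
          have hAB2 : (A₀ * B) ^ 2 % 8 = 1 := by
            apply sq_mod8
            have h := Nat.mul_mod A₀ B 2
            rw [hA₀1, hB1] at h
            simpa using h
          have hAw : (A₀ * w0) % 2 = 1 := by
            have h := Nat.mul_mod A₀ w0 2
            rw [hA₀1, hw0odd] at h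
            simpa using h
          obtain ⟨x, hx⟩ : ∃ x, x = E ^ 2 := ⟨_, rfl⟩
          obtain ⟨y, hy⟩ : ∃ y, y = (A₀ * B) ^ 2 := ⟨_, rfl⟩
          obtain ⟨z, hz⟩ : ∃ z, z = A₀ * w0 := ⟨_, rfl⟩
          rw [← hx] at hE2 hmain
          rw [← hy] at hAB2 hmain
          rw [← hz] at hAw hmain
          omega
        · -- α ≥ 3
          have hα3 : 3 ≤ α := by omega
          have hpowA : (2:ℕ) ^ α = 8 * 2 ^ (α - 3) := by
            rw [show α = 3 + (α - 3) by omega, pow_add]; norm_num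
          have h8A : 8 ∣ A * B ^ 2 :=
            dvd_mul_of_dvd_left
              ⟨2 ^ (α - 3) * A₀, by rw [← hAfac, hpowA]; ring⟩ _
          by_cases hκ1' : κ = 1
          · have hK2 : K = 2 * K₀ := by rw [← hKfac, hκ1']; ring
            obtain ⟨T, hT⟩ : ∃ T, T = A * B ^ 2 := ⟨_, rfl⟩
            rw [← hT] at hF2 h8A
            omega
          · have hκ3 : 3 ≤ κ := by omega
            have hpowK : (2:ℕ) ^ κ = 8 * 2 ^ (κ - 3) := by
              rw [show κ = 3 + (κ - 3) by omega, pow_add]; norm_num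
            have h8K : 8 ∣ K :=
              ⟨2 ^ (κ - 3) * K₀, by rw [← hKfac, hpowK]; ring⟩
            obtain ⟨T, hT⟩ : ∃ T, T = A * B ^ 2 := ⟨_, rfl⟩
            rw [← hT] at hF2 h8A
            omega
      have hX2Y2 : J((2 : ℤ) | p) * J((2 : ℤ) | B) = 1 := by
        rw [jacobiSym.at_two (Nat.odd_iff.mpr hpodd), jacobiSym.at_two hBodd,
          ZMod.χ₈_nat_eq_if_mod_eight, ZMod.χ₈_nat_eq_if_mod_eight]
        have hp8 : p % 8 = 1 ∨ p % 8 = 5 := by omega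
        have e1 : ¬ (p % 2 = 0) := by omega
        have e2 : ¬ (B % 2 = 0) := by omega
        rcases hp8 with h | h
        · have hB8 : B % 8 = 7 := by omega
          simp only [if_neg e1, if_neg e2,
            if_pos (show p % 8 = 1 ∨ p % 8 = 7 from Or.inl h),
            if_pos (show B % 8 = 1 ∨ B % 8 = 7 from Or.inr hB8)]
          norm_num
        · have hB8 : B % 8 = 3 := by omega
          have e3 : ¬ (p % 8 = 1 ∨ p % 8 = 7) := by omega
          have e4 : ¬ (B % 8 = 1 ∨ B % 8 = 7) := by omega
          simp only [if_neg e1, if_neg e2, if_neg e3, if_neg e4]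
          norm_num
      constructor
      · rw [pow_odd_eq_self hX22 hα1, pow_odd_eq_self hY22 hκ1]; exact hX2Y2
      · rw [pow_odd_eq_self hX22 hκ1, pow_odd_eq_self hY22 hκ1]; exact hX2Y2
  obtain ⟨hP1, hP2⟩ := hP
  constructor
  · rw [jacobiSym.legendreSym.to_jacobiSym]
    have hmain : J(a * b | p) =
        -(J((2 : ℤ) | p) ^ α * J((2 : ℤ) | B) ^ κ) * J((d : ℤ) | p) ^ 2 := by
      rw [jacobiSym.mul_left, hJa, hJb]; ring
    rw [hmain, hXd2, hP1]; ring
  · rw [jacobiSym.legendreSym.to_jacobiSym]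
    have hb2 : J(b | p) ^ 2 = 1 := by rw [← hB]; exact hXb2
    calc J(a * b - 1 | p) = J(b | p) ^ 2 * J(a * b - 1 | p) := by rw [hb2, one_mul]
      _ = J(b | p) * (J(b | p) * J(a * b - 1 | p)) := by ring
      _ = J(b | p) * J(Kz | p) := by rw [← hJsplit]
      _ = (-(J((2 : ℤ) | B) ^ κ * J((d : ℤ) | p))) *
            (J((2 : ℤ) | p) ^ κ * J((d : ℤ) | p)) := by rw [hJb, hJK]
      _ = -(J((2 : ℤ) | p) ^ κ * J((2 : ℤ) | B) ^ κ) * J((d : ℤ) | p) ^ 2 := by ring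
      _ = -1 := by rw [hXd2, hP2]; ring
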